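/- Let X be a set and let 𝒜, ℬ be collections of subsets of X such that 𝒜 is Γ-like and closed under finite unions. Then α_{1.5}(𝒜,ℬ) implies α₂(𝒜,ℬ). -/
import Mathlib


open Set

/-- A collection `𝒜` of subsets of `X` is Γ-like if every member is infinite
and every infinite subset of a member is itself a member. -/
def GammaLike {X : Type*} (𝒜 : Set (Set X)) : Prop :=
  ∀ A ∈ 𝒜, A.Infinite ∧ ∀ A' ⊆ A, A'.Infinite → A' ∈ 𝒜

/-- A collection `𝒜` is almost-Γ-like if each `A ∈ 𝒜` has a countably infinite
subset `A'` all of whose cofinite subsets belong to `𝒜`. -/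
def AlmostGammaLike {X : Type*} (𝒜 : Set (Set X)) : Prop :=
  ∀ A ∈ 𝒜, ∃ A' ⊆ A, A'.Countable ∧ A'.Infinite ∧
    ∀ A'' ⊆ A', (A' \ A'').Finite → A'' ∈ 𝒜

/-- `𝒜` is closed under finite unions. -/
def UnionClosed {X : Type*} (𝒜 : Set (Set X)) : Prop :=
  ∀ A ∈ 𝒜, ∀ B ∈ 𝒜, A ∪ B ∈ 𝒜

/-- α₁(𝒜,ℬ): for every sequence from 𝒜 there is `B ∈ ℬ` with `A n \ B` finite for all `n`. -/
def Alpha1 {X : Type*} (𝒜 ℬ : Set (Set X)) : Prop :=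
  ∀ A : ℕ → Set X, (∀ n, A n ∈ 𝒜) → ∃ B ∈ ℬ, ∀ n, (A n \ B).Finite

/-- α₂(𝒜,ℬ): for every sequence from 𝒜 there is `B ∈ ℬ` meeting each `A n` infinitely. -/
def Alpha2 {X : Type*} (𝒜 ℬ : Set (Set X)) : Prop :=
  ∀ A : ℕ → Set X, (∀ n, A n ∈ 𝒜) → ∃ B ∈ ℬ, ∀ n, (A n ∩ B).Infinite

/-- α₂'(𝒜,ℬ): for every sequence from 𝒜 there is `B ∈ ℬ` meeting each `A n`. -/
def Alpha2' {X : Type*} (𝒜 ℬ : Set (Set X)) : Prop :=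
  ∀ A : ℕ → Set X, (∀ n, A n ∈ 𝒜) → ∃ B ∈ ℬ, ∀ n, (A n ∩ B).Nonempty

/-- α₃(𝒜,ℬ): for every sequence from 𝒜 there is `B ∈ ℬ` meeting infinitely many `A n` infinitely. -/
def Alpha3 {X : Type*} (𝒜 ℬ : Set (Set X)) : Prop :=
  ∀ A : ℕ → Set X, (∀ n, A n ∈ 𝒜) → ∃ B ∈ ℬ, {n | (A n ∩ B).Infinite}.Infinite

/-- α₄(𝒜,ℬ): for every sequence from 𝒜 there is `B ∈ ℬ` meeting infinitely many `A n`. -/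
def Alpha4 {X : Type*} (𝒜 ℬ : Set (Set X)) : Prop :=
  ∀ A : ℕ → Set X, (∀ n, A n ∈ 𝒜) → ∃ B ∈ ℬ, {n | (A n ∩ B).Nonempty}.Infinite

/-- α_{1.1}(𝒜,ℬ): α₁ restricted to pairwise disjoint sequences. -/
def Alpha1p1 {X : Type*} (𝒜 ℬ : Set (Set X)) : Prop :=
  ∀ A : ℕ → Set X, (∀ n, A n ∈ 𝒜) → (∀ m n, m ≠ n → Disjoint (A m) (A n)) →
    ∃ B ∈ ℬ, ∀ n, (A n \ B).Finite

/-- α_{1.5}(𝒜,ℬ): for pairwise disjoint sequences from 𝒜 there is `B ∈ ℬ` with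
`A n \ B` finite for infinitely many `n`. -/
def Alpha1p5 {X : Type*} (𝒜 ℬ : Set (Set X)) : Prop :=
  ∀ A : ℕ → Set X, (∀ n, A n ∈ 𝒜) → (∀ m n, m ≠ n → Disjoint (A m) (A n)) →
    ∃ B ∈ ℬ, {n | (A n \ B).Finite}.Infinite

/-- α_{2.1}(𝒜,ℬ): α₂ restricted to pairwise disjoint sequences. -/
def Alpha2p1 {X : Type*} (𝒜 ℬ : Set (Set X)) : Prop :=
  ∀ A : ℕ → Set X, (∀ n, A n ∈ 𝒜) → (∀ m n, m ≠ n → Disjoint (A m) (A n)) →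
    ∃ B ∈ ℬ, ∀ n, (A n ∩ B).Infinite

/-- α_{3.1}(𝒜,ℬ): α₃ restricted to pairwise disjoint sequences. -/
def Alpha3p1 {X : Type*} (𝒜 ℬ : Set (Set X)) : Prop :=
  ∀ A : ℕ → Set X, (∀ n, A n ∈ 𝒜) → (∀ m n, m ≠ n → Disjoint (A m) (A n)) →
    ∃ B ∈ ℬ, {n | (A n ∩ B).Infinite}.Infinite

/-- α_{4.1}(𝒜,ℬ): α₄ restricted to pairwise disjoint sequences. -/
def Alpha4p1 {X : Type*} (𝒜 ℬ : Set (Set X)) : Prop :=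
  ∀ A : ℕ → Set X, (∀ n, A n ∈ 𝒜) → (∀ m n, m ≠ n → Disjoint (A m) (A n)) →
    ∃ B ∈ ℬ, {n | (A n ∩ B).Nonempty}.Infinite

/-- Player I has a winning predetermined strategy in G₁(𝒜,ℬ). -/
def PredWinG1 {X : Type*} (𝒜 ℬ : Set (Set X)) : Prop :=
  ∃ A : ℕ → Set X, (∀ n, A n ∈ 𝒜) ∧
    ∀ a : ℕ → X, (∀ n, a n ∈ A n) → Set.range a ∉ ℬ

/-- Player I has a winning predetermined strategy in G_fin(𝒜,ℬ). -/
def PredWinGfin {X : Type*} (𝒜 ℬ : Set (Set X)) : Prop :=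
  ∃ A : ℕ → Set X, (∀ n, A n ∈ 𝒜) ∧
    ∀ F : ℕ → Set X, (∀ n, (F n).Finite ∧ F n ⊆ A n) → (⋃ n, F n) ∉ ℬ

/-- Player I has a winning predetermined strategy in G_{<2}(𝒜,ℬ),
where II picks at most one point each round. -/
def PredWinGlt2 {X : Type*} (𝒜 ℬ : Set (Set X)) : Prop :=
  ∃ A : ℕ → Set X, (∀ n, A n ∈ 𝒜) ∧
    ∀ F : ℕ → Set X, (∀ n, (F n).Subsingleton ∧ F n ⊆ A n) → (⋃ n, F n) ∉ ℬ

/-- Player I has a winning predetermined strategy in G_cf(𝒜,ℬ),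
where II picks a cofinite subset each round. -/
def PredWinGcf {X : Type*} (𝒜 ℬ : Set (Set X)) : Prop :=
  ∃ A : ℕ → Set X, (∀ n, A n ∈ 𝒜) ∧
    ∀ B : ℕ → Set X, (∀ n, B n ⊆ A n ∧ (A n \ B n).Finite) → (⋃ n, B n) ∉ ℬ

/-- Player I has a winning perfect-information strategy in G₁(𝒜,ℬ):
a function from finite sequences of points of X into 𝒜 defeating all counterplays. -/
def WinG1 {X : Type*} (𝒜 ℬ : Set (Set X)) : Prop :=
  ∃ σ : List X → Set X, (∀ s, σ s ∈ 𝒜) ∧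
    ∀ a : ℕ → X, (∀ n, a n ∈ σ (List.ofFn fun i : Fin n => a i)) → Set.range a ∉ ℬ

/-- Player I has a winning perfect-information strategy in G_fin(𝒜,ℬ):
a function from finite sequences of finite subsets of X into 𝒜 defeating all counterplays. -/
def WinGfin {X : Type*} (𝒜 ℬ : Set (Set X)) : Prop :=
  ∃ σ : List (Set X) → Set X, (∀ s : List (Set X), (∀ F ∈ s, F.Finite) → σ s ∈ 𝒜) ∧
    ∀ F : ℕ → Set X,
      (∀ n, (F n).Finite ∧ F n ⊆ σ (List.ofFn fun i : Fin n => F i)) →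
      (⋃ n, F n) ∉ ℬ

/-- Player I has a winning perfect-information strategy in G_{<2}(𝒜,ℬ):
a function from finite sequences of at-most-singleton subsets of X into 𝒜
defeating all counterplays. -/
def WinGlt2 {X : Type*} (𝒜 ℬ : Set (Set X)) : Prop :=
  ∃ σ : List (Set X) → Set X, (∀ s : List (Set X), (∀ F ∈ s, F.Subsingleton) → σ s ∈ 𝒜) ∧
    ∀ F : ℕ → Set X,
      (∀ n, (F n).Subsingleton ∧ F n ⊆ σ (List.ofFn fun i : Fin n => F i)) →
      (⋃ n, F n) ∉ ℬ

/-- Pick a point of `A (k t)` at step `t`, avoiding all previously picked points. -/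
noncomputable def pickAux {X : Type*} (A : ℕ → Set X) (hinf : ∀ n, (A n).Infinite)
    (k : ℕ → ℕ) : ℕ → X
  | t =>
    (((hinf (k t)).diff
      (Set.finite_range fun s : Set.Iio t => pickAux A hinf k s)).nonempty).some
termination_by t => t
decreasing_by all_goals exact s.2

lemma pickAux_spec {X : Type*} (A : ℕ → Set X) (hinf : ∀ n, (A n).Infinite)
    (k : ℕ → ℕ) (t : ℕ) :
    pickAux A hinf k t ∈ A (k t) \ Set.range (fun s : Set.Iio t => pickAux A hinf k s) := by
  rw [pickAux]
  exact Set.Nonempty.some_mem _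

lemma pickAux_mem {X : Type*} (A : ℕ → Set X) (hinf : ∀ n, (A n).Infinite)
    (k : ℕ → ℕ) (t : ℕ) : pickAux A hinf k t ∈ A (k t) :=
  (pickAux_spec A hinf k t).1

lemma pickAux_injective {X : Type*} (A : ℕ → Set X) (hinf : ∀ n, (A n).Infinite)
    (k : ℕ → ℕ) : Function.Injective (pickAux A hinf k) := by
  intro s t hst
  by_contra hne
  rcases lt_trichotomy s t with hlt | heq | hgt
  · exact (pickAux_spec A hinf k t).2 ⟨⟨s, hlt⟩, hst⟩
  · exact hne heq
  · exact (pickAux_spec A hinf k s).2 ⟨⟨t, hgt⟩, hst.symm⟩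

/-- If 𝒜 is Γ-like and closed under finite unions, then
α_{1.5}(𝒜,ℬ) implies α₂(𝒜,ℬ). -/
theorem stmt17 {X : Type*} (𝒜 ℬ : Set (Set X))
    (hA : GammaLike 𝒜) (hU : UnionClosed 𝒜) (h : Alpha1p5 𝒜 ℬ) :
    Alpha2 𝒜 ℬ := by
  intro A hAmem
  classical
  have hinf : ∀ n, (A n).Infinite := fun n => (hA _ (hAmem n)).1
  -- index functions: at step t we aim at pair (mI t, k t) with k t ≤ mI t
  set k : ℕ → ℕ := fun t => min (Nat.unpair (Nat.unpair t).2).2 (Nat.unpair (Nat.unpair t).2).1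
    with hkdef
  set mI : ℕ → ℕ := fun t => (Nat.unpair (Nat.unpair t).2).1 with hmdef
  set g : ℕ → X := pickAux A hinf k with hgdef
  have hg_inj : Function.Injective g := pickAux_injective A hinf k
  have hg_mem : ∀ t, g t ∈ A (k t) := pickAux_mem A hinf k
  set D : ℕ → Set X := fun m => g '' {t | mI t = m} with hDdef
  -- the key infinite families of indices
  have hTmem : ∀ m n c, mI (Nat.pair c (Nat.pair m n)) = m ∧
      (n ≤ m → k (Nat.pair c (Nat.pair m n)) = n) := by
    intro m n c
    constructor
    · simp [hmdef, Nat.unpair_pair]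
    · intro hnm
      simp [hkdef, Nat.unpair_pair, min_eq_left hnm]
  have hkey : ∀ m n, n ≤ m → (D m ∩ A n).Infinite := by
    intro m n hnm
    have hinj : Function.Injective (fun c => g (Nat.pair c (Nat.pair m n))) := by
      intro c c' hcc
      have := hg_inj hcc
      have h2 := congrArg (fun x => (Nat.unpair x).1) this
      simpa [Nat.unpair_pair] using h2
    apply Set.infinite_of_injective_forall_mem hinj
    intro c
    refine ⟨⟨Nat.pair c (Nat.pair m n), (hTmem m n c).1, rfl⟩, ?_⟩
    have := hg_mem (Nat.pair c (Nat.pair m n))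
    rwa [(hTmem m n c).2 hnm] at this
  have hDinf : ∀ m, (D m).Infinite := fun m =>
    ((hkey m m le_rfl).mono Set.inter_subset_left)
  -- finite unions of the A's are in 𝒜
  have hUn : ∀ n, (⋃ j ∈ Finset.range (n + 1), A j) ∈ 𝒜 := by
    intro n
    induction n with
    | zero => simpa using hAmem 0
    | succ n ih =>
      rw [Finset.range_add_one, Finset.set_biUnion_insert]
      exact hU _ (hAmem _) _ ih
  have hDmem : ∀ m, D m ∈ 𝒜 := by
    intro m
    refine (hA _ (hUn m)).2 (D m) ?_ (hDinf m)
    rintro x ⟨t, ht, rfl⟩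
    have hklem : k t ≤ m := le_trans (min_le_right _ _) (le_of_eq ht)
    exact Set.mem_biUnion (Finset.mem_range.mpr (Nat.lt_succ_of_le hklem)) (hg_mem t)
  have hdisj : ∀ m m', m ≠ m' → Disjoint (D m) (D m') := by
    intro m m' hmm
    rw [Set.disjoint_left]
    rintro x ⟨t, ht, rfl⟩ ⟨t', ht', hx⟩
    exact hmm (ht ▸ hg_inj hx.symm ▸ ht')
  obtain ⟨B, hB, hS⟩ := h D hDmem hdisj
  refine ⟨B, hB, fun n => ?_⟩
  obtain ⟨m, hmS, hnm⟩ := hS.exists_gt n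
  have hE : (D m ∩ A n).Infinite := hkey m n hnm.le
  have : ((D m ∩ A n) \ (D m \ B)).Infinite := hE.diff hmS
  refine this.mono ?_
  rintro x ⟨⟨hxD, hxA⟩, hx2⟩
  refine ⟨hxA, ?_⟩
  by_contra hxB
  exact hx2 ⟨hxD, hxB⟩
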